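/- In a Garside monoid of spindle type, if Δ left-divides a positive element b, then every word over the atoms representing b contains a factor (infix) that represents Δ. -/

import Mathlib

/-- a left-divides b. -/
def LeftDvd {M : Type*} [Monoid M] (a b : M) : Prop := ∃ c : M, b = a * c

/-- a right-divides b. -/
def RightDvd' {M : Type*} [Monoid M] (a b : M) : Prop := ∃ c : M, b = c * a

/-- m is a right lcm of a and b. -/
def IsRightLcm {M : Type*} [Monoid M] (a b m : M) : Prop :=
  LeftDvd a m ∧ LeftDvd b m ∧ ∀ x : M, LeftDvd a x → LeftDvd b x → LeftDvd m x

/-- m is a left lcm of a and b. -/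
def IsLeftLcm {M : Type*} [Monoid M] (a b m : M) : Prop :=
  RightDvd' a m ∧ RightDvd' b m ∧ ∀ x : M, RightDvd' a x → RightDvd' b x → RightDvd' m x

/-- g is a left gcd of a and b. -/
def IsLeftGcd {M : Type*} [Monoid M] (a b g : M) : Prop :=
  LeftDvd g a ∧ LeftDvd g b ∧ ∀ x : M, LeftDvd x a → LeftDvd x b → LeftDvd x g

/-- g is a right gcd of a and b. -/
def IsRightGcd {M : Type*} [Monoid M] (a b g : M) : Prop :=
  RightDvd' g a ∧ RightDvd' g b ∧ ∀ x : M, RightDvd' x a → RightDvd' x b → RightDvd' x g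

/-- A monoid is Noetherian (atomic): the lengths of factorizations of any
    element into non-identity factors are bounded. -/
def NoetherianMonoid (M : Type*) [Monoid M] : Prop :=
  ∀ a : M, ∃ n : ℕ, ∀ l : List M, (∀ x ∈ l, x ≠ 1) → l.prod = a → l.length ≤ n

/-- A Garside monoid structure: a Noetherian cancellative monoid with right and
    left lcms, together with a balanced Garside element Δ whose (finite) set of
    divisors generates the monoid. -/
structure GarsideMonoid (M : Type*) [Monoid M] where
  Δ : M
  noeth : NoetherianMonoid M
  cancel : ∀ a b b' c : M, a * b * c = a * b' * c → b = b'
  rlcm : ∀ a b : M, ∃ m : M, IsRightLcm a b m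
  llcm : ∀ a b : M, ∃ m : M, IsLeftLcm a b m
  balanced : ∀ x : M, LeftDvd x Δ ↔ RightDvd' x Δ
  finS : {x : M | LeftDvd x Δ}.Finite
  genS : Submonoid.closure {x : M | LeftDvd x Δ} = ⊤

/-- The set of simple elements: divisors of the Garside element Δ. -/
def GarsideMonoid.S {M : Type*} [Monoid M] (gs : GarsideMonoid M) : Set M :=
  {x : M | LeftDvd x gs.Δ}

/-- A Garside system is of spindle type if the left and right gcds of any
    two simple elements a, b lie in {a, b, 1}. -/
def GarsideMonoid.SpindleType {M : Type*} [Monoid M] (gs : GarsideMonoid M) : Prop :=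
  (∀ a ∈ gs.S, ∀ b ∈ gs.S, ∀ g : M, IsLeftGcd a b g → g = a ∨ g = b ∨ g = 1) ∧
  (∀ a ∈ gs.S, ∀ b ∈ gs.S, ∀ g : M, IsRightGcd a b g → g = a ∨ g = b ∨ g = 1)

/-- x is an atom: non-identity and admitting no nontrivial factorization. -/
def IsAtomOf (M : Type*) [Monoid M] (x : M) : Prop :=
  x ≠ 1 ∧ ∀ y z : M, x = y * z → y = 1 ∨ z = 1


section GarsideAux

variable {M : Type*} [Monoid M]

lemma ldvd_refl (a : M) : LeftDvd a a := ⟨1, (mul_one a).symm⟩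

lemma one_ldvd (a : M) : LeftDvd 1 a := ⟨a, (one_mul a).symm⟩

lemma ldvd_trans {a b c : M} (h1 : LeftDvd a b) (h2 : LeftDvd b c) : LeftDvd a c := by
  obtain ⟨u, rfl⟩ := h1; obtain ⟨v, rfl⟩ := h2; exact ⟨u * v, mul_assoc a u v⟩

lemma noeth_unit (hn : NoetherianMonoid M) {u v : M} (h : u * v = 1) : u = 1 := by
  by_contra hu
  have hv : v ≠ 1 := fun hv => hu (by simpa [hv] using h)
  obtain ⟨n, hN⟩ := hn 1
  have hlen := hN ((List.replicate (n+1) [u, v]).flatten) ?_ ?_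
  · simp [List.length_flatten] at hlen
    · omega
  · intro x hx
    rw [List.mem_flatten] at hx
    obtain ⟨l', hl', hxl⟩ := hx
    rw [List.eq_of_mem_replicate hl'] at hxl
    simp at hxl
    rcases hxl with h' | h'
    · exact h' ▸ hu
    · exact h' ▸ hv
  · rw [List.prod_flatten]
    simp [h]

lemma gs_lcancel (gs : GarsideMonoid M) {a b b' : M} (h : a * b = a * b') : b = b' :=
  gs.cancel a b b' 1 (by simpa using h)

lemma gs_rcancel (gs : GarsideMonoid M) {b b' c : M} (h : b * c = b' * c) : b = b' :=
  gs.cancel 1 b b' c (by simpa using h)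

lemma gs_unit (gs : GarsideMonoid M) {u v : M} (h : u * v = 1) : u = 1 ∧ v = 1 := by
  have hu := noeth_unit gs.noeth h
  exact ⟨hu, by simpa [hu] using h⟩

lemma ldvd_antisymm (gs : GarsideMonoid M) {a b : M} (h1 : LeftDvd a b) (h2 : LeftDvd b a) : a = b := by
  obtain ⟨c, hc⟩ := h1
  obtain ⟨d, hd⟩ := h2
  have : a * (c * d) = a * 1 := by rw [← mul_assoc, ← hc, ← hd, mul_one]
  have hcd : c * d = 1 := gs_lcancel gs this
  rw [hc, (gs_unit gs hcd).1, mul_one]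

lemma atom_simple (gs : GarsideMonoid M) {x : M} (hx : IsAtomOf M x) : LeftDvd x gs.Δ := by
  have hmem : x ∈ Submonoid.closure {y : M | LeftDvd y gs.Δ} := by
    rw [gs.genS]; trivial
  refine Submonoid.closure_induction
    (motive := fun m _ => IsAtomOf M m → LeftDvd m gs.Δ) (fun m hm _ => hm) ?_ ?_ hmem hx
  · intro h1; exact absurd rfl h1.1
  · intro m n _ _ hm hn hmn
    rcases hmn.2 m n rfl with h | h
    · subst h; simpa using hn (by simpa using hmn)
    · subst h; simpa using hm (by simpa using hmn)

/-- Left gcds with arbitrary elements exist (as lcm of the finite set of common divisors). -/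
lemma exists_head (gs : GarsideMonoid M) (m : M) : ∃ g : M, IsLeftGcd gs.Δ m g := by
  classical
  have key : ∀ F : Finset M, ∃ g : M,
      (∀ t ∈ F, LeftDvd t g) ∧ ∀ c : M, (∀ t ∈ F, LeftDvd t c) → LeftDvd g c := by
    intro F
    induction F using Finset.induction with
    | empty => exact ⟨1, by simp, fun c _ => one_ldvd c⟩
    | @insert a F ha ih =>
      obtain ⟨g, hg1, hg2⟩ := ih
      obtain ⟨l, hl1, hl2, hl3⟩ := gs.rlcm a g
      refine ⟨l, ?_, ?_⟩
      · intro t ht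
        rcases Finset.mem_insert.1 ht with rfl | ht
        · exact hl1
        · exact ldvd_trans (hg1 t ht) hl2
      · intro c hc
        exact hl3 c (hc a (Finset.mem_insert_self a F))
          (hg2 c fun t ht => hc t (Finset.mem_insert_of_mem ht))
  have hfin : {x : M | LeftDvd x gs.Δ ∧ LeftDvd x m}.Finite :=
    gs.finS.subset fun x hx => hx.1
  obtain ⟨g, hg1, hg2⟩ := key hfin.toFinset
  refine ⟨g, hg2 _ fun t ht => (hfin.mem_toFinset.1 ht).1,
    hg2 _ fun t ht => (hfin.mem_toFinset.1 ht).2,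
    fun x hx1 hx2 => hg1 x (hfin.mem_toFinset.2 ⟨hx1, hx2⟩)⟩

/-- Conjugation by Δ: every simple can be pushed through Δ. -/
lemma exists_conj (gs : GarsideMonoid M) {m : M} (hm : LeftDvd m gs.Δ) :
    ∃ w : M, w * gs.Δ = gs.Δ * m := by
  obtain ⟨k, hk⟩ := (gs.balanced m).1 hm
  obtain ⟨w, hw⟩ := (gs.balanced k).1 ⟨m, hk⟩
  refine ⟨w, ?_⟩
  calc w * gs.Δ = w * k * m := by rw [hk, mul_assoc]
    _ = gs.Δ * m := by rw [← hw]

/-- The right complement of an atom is a coatom in the divisor lattice of Δ. -/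
lemma coatom (gs : GarsideMonoid M) {x p : M} (hx : IsAtomOf M x) (hp : gs.Δ = x * p) :
    ∀ t : M, LeftDvd p t → LeftDvd t gs.Δ → t = p ∨ t = gs.Δ := by
  have hpS : LeftDvd p gs.Δ := (gs.balanced p).2 ⟨x, hp⟩
  obtain ⟨q, hq⟩ := hpS
  have hqatom : ∀ u v : M, q = u * v → u = 1 ∨ v = 1 := by
    intro u v huv
    have hxD : x * gs.Δ = gs.Δ * (u * v) := by
      calc x * gs.Δ = x * p * q := by rw [hq, mul_assoc]
        _ = gs.Δ * q := by rw [← hp]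
        _ = gs.Δ * (u * v) := by rw [huv]
    have hqS : LeftDvd q gs.Δ := (gs.balanced q).2 ⟨p, hq⟩
    have huS : LeftDvd u gs.Δ := ldvd_trans ⟨v, huv⟩ hqS
    have hvS : LeftDvd v gs.Δ := (gs.balanced v).2 ⟨p * u, by rw [hq, huv, mul_assoc]⟩
    obtain ⟨u', hu'⟩ := exists_conj gs huS
    obtain ⟨v', hv'⟩ := exists_conj gs hvS
    have : x * gs.Δ = (u' * v') * gs.Δ := by
      calc x * gs.Δ = gs.Δ * u * v := by rw [hxD, mul_assoc]
        _ = u' * (gs.Δ * v) := by rw [← hu', mul_assoc]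
        _ = u' * (v' * gs.Δ) := by rw [← hv']
        _ = (u' * v') * gs.Δ := by rw [mul_assoc]
    have hx' : x = u' * v' := gs_rcancel gs this
    rcases hx.2 u' v' hx' with h | h
    · left
      have : gs.Δ * u = gs.Δ * 1 := by rw [← hu', h, one_mul, mul_one]
      exact gs_lcancel gs this
    · right
      have : gs.Δ * v = gs.Δ * 1 := by rw [← hv', h, one_mul, mul_one]
      exact gs_lcancel gs this
  intro t ht1 ht2
  obtain ⟨r, hr⟩ := ht1
  obtain ⟨c, hc⟩ := ht2
  have hqrc : q = r * c := by
    refine gs_lcancel gs (a := p) ?_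
    rw [← hq, hc, hr, mul_assoc]
  rcases hqatom r c hqrc with h | h
  · left; rw [hr, h, mul_one]
  · right; rw [hc, h, mul_one]

/-- Head splitting: the head of x·u is x times the gcd of ∂x with the head of u. -/
lemma head_step (gs : GarsideMonoid M) {x u h h₂ : M} (hx : IsAtomOf M x)
    (hh : IsLeftGcd gs.Δ (x * u) h) (hh2 : IsLeftGcd gs.Δ u h₂) :
    ∃ h' p : M, gs.Δ = x * p ∧ h = x * h' ∧ IsLeftGcd p h₂ h' := by
  obtain ⟨p, hp⟩ := atom_simple gs hx
  have hxh : LeftDvd x h := hh.2.2 x ⟨p, hp⟩ ⟨u, rfl⟩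
  obtain ⟨h', hh'⟩ := hxh
  obtain ⟨m, hm⟩ := hh.1
  have h'p : LeftDvd h' p := by
    refine ⟨m, gs_lcancel gs (a := x) ?_⟩
    rw [← hp, hm, hh', mul_assoc]
  have h'u : LeftDvd h' u := by
    obtain ⟨c, hc⟩ := hh.2.1
    refine ⟨c, gs_lcancel gs (a := x) ?_⟩
    rw [← mul_assoc, ← hh', ← hc]
  have hpS : LeftDvd p gs.Δ := (gs.balanced p).2 ⟨x, hp⟩
  have h'h₂ : LeftDvd h' h₂ := hh2.2.2 h' (ldvd_trans h'p hpS) h'u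
  refine ⟨h', p, hp, hh', h'p, h'h₂, ?_⟩
  intro k hkp hk2
  have hk1 : LeftDvd (x * k) gs.Δ := by
    obtain ⟨c, hc⟩ := hkp
    exact ⟨c, by rw [hp, hc, mul_assoc]⟩
  have hk3 : LeftDvd (x * k) (x * u) := by
    obtain ⟨c, hc⟩ := ldvd_trans hk2 hh2.2.1
    exact ⟨c, by rw [hc, mul_assoc]⟩
  obtain ⟨c, hc⟩ := hh.2.2 (x * k) hk1 hk3
  refine ⟨c, gs_lcancel gs (a := x) ?_⟩
  rw [← mul_assoc, ← hh', hc, mul_assoc]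

/-- Main induction: for a word of atoms, its head is either realized as a prefix
    product, or the word contains an infix representing Δ. -/
lemma garside_main (gs : GarsideMonoid M) (hsp : gs.SpindleType) :
    ∀ l : List M, (∀ x ∈ l, IsAtomOf M x) → ∀ s : M, IsLeftGcd gs.Δ l.prod s →
      (∃ k : ℕ, (l.take k).prod = s) ∨
      (∃ u d v : List M, l = u ++ d ++ v ∧ d.prod = gs.Δ) := by
  intro l
  induction l with
  | nil =>
    intro _ s hs
    left
    obtain ⟨c, hc⟩ := hs.2.1
    have : s = 1 := (gs_unit gs hc.symm).1
    exact ⟨0, by simpa using this.symm⟩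
  | cons x l ih =>
    intro hatoms s hs
    have hx : IsAtomOf M x := hatoms x List.mem_cons_self
    rw [List.prod_cons] at hs
    obtain ⟨h₂, hh2⟩ := exists_head gs l.prod
    obtain ⟨h', p, hp, hh', hgcd⟩ := head_step gs hx hs hh2
    have IH := ih (fun y hy => hatoms y (List.mem_cons_of_mem x hy)) h₂ hh2
    have hpS : p ∈ gs.S := (gs.balanced p).2 ⟨x, hp⟩
    have hh2S : h₂ ∈ gs.S := hh2.1
    rcases hsp.1 p hpS h₂ hh2S h' hgcd with h'eq | h'eq | h'eq
    · -- h' = p : head is Δ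
      have hsΔ : s = gs.Δ := by rw [hh', h'eq, hp]
      have hph2 : LeftDvd p h₂ := h'eq ▸ hgcd.2.1
      rcases coatom gs hx hp h₂ hph2 hh2S with h2eq | h2eq
      · rcases IH with ⟨k, hk⟩ | ⟨u, d, v, hudv, hd⟩
        · left
          refine ⟨k + 1, ?_⟩
          rw [List.take_succ_cons, List.prod_cons, hk, h2eq, ← hp, hsΔ]
        · right
          exact ⟨x :: u, d, v, by rw [hudv]; rfl, hd⟩
      · rcases IH with ⟨k, hk⟩ | ⟨u, d, v, hudv, hd⟩
        · right
          refine ⟨[x], l.take k, l.drop k, ?_, by rw [hk, h2eq]⟩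
          simp [List.take_append_drop]
        · right
          exact ⟨x :: u, d, v, by rw [hudv]; rfl, hd⟩
    · -- h' = h₂
      rcases IH with ⟨k, hk⟩ | ⟨u, d, v, hudv, hd⟩
      · left
        refine ⟨k + 1, ?_⟩
        rw [List.take_succ_cons, List.prod_cons, hk, ← h'eq, ← hh']
      · right
        exact ⟨x :: u, d, v, by rw [hudv]; rfl, hd⟩
    · -- h' = 1
      left
      refine ⟨1, ?_⟩
      simp [hh', h'eq]

end GarsideAux

/-- In a Garside monoid of spindle type, if Δ left-divides b then every
    word over the atoms representing b contains an infix representing Δ. -/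
theorem stmt_6 {M : Type*} [Monoid M] (gs : GarsideMonoid M)
    (hsp : gs.SpindleType) (b : M) (hb : LeftDvd gs.Δ b) :
    ∀ l : List M, (∀ x ∈ l, IsAtomOf M x) → l.prod = b →
      ∃ u d v : List M, l = u ++ d ++ v ∧ d.prod = gs.Δ := by
  intro l hl hprod
  obtain ⟨g, hg⟩ := exists_head gs l.prod
  have hgΔ : g = gs.Δ := ldvd_antisymm gs hg.1 (hg.2.2 gs.Δ (ldvd_refl _) (hprod ▸ hb))
  rcases garside_main gs hsp l hl g hg with ⟨k, hk⟩ | hinf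
  · exact ⟨[], l.take k, l.drop k, by simp [List.take_append_drop], by rw [hk, hgΔ]⟩
  · exact hinf
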